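/- Let d, m, c, e be integers with d = 2c + e, e ∈ {0,1}, m ≥ 1, 16m ≤ 5d and 3d < 10m. Set a = 5m - 3c - e and b = 5m + a - 3c - e. Then twice the virtual dimension 2v = (2m+a)(2m+a+3) - 4m(m+1) - 2b(b+1) - 2(b-e)(b-e+1) satisfies 2v = (5m-3c)(45c-71m) + (15c-23m) + 6e(31m-19c-3), and moreover 2v ≥ 0. -/
import Mathlib


/-- For `d = 2c+e`, `e ∈ {0,1}`, `m ≥ 1`, `16m ≤ 5d`, `3d < 10m`,
`a = 5m - 3c - e`, `b = 5m + a - 3c - e`, twice the virtual dimension of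
`L(2m+a; m^4, [b,b-e]^2)` equals `(5m-3c)(45c-71m) + (15c-23m) + 6e(31m-19c-3)`
and is nonnegative. -/
theorem stmt4 (d m c e a b : ℤ) (hde : d = 2 * c + e) (he : e = 0 ∨ e = 1)
    (hm : 1 ≤ m) (h1 : 16 * m ≤ 5 * d) (h2 : 3 * d < 10 * m)
    (ha : a = 5 * m - 3 * c - e) (hb : b = 5 * m + a - 3 * c - e) :
    (2*m + a) * (2*m + a + 3) - 4 * m * (m + 1)
        - 2 * b * (b + 1) - 2 * (b - e) * (b - e + 1)
      = (5*m - 3*c) * (45*c - 71*m) + (15*c - 23*m) + 6 * e * (31*m - 19*c - 3) ∧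
    0 ≤ (2*m + a) * (2*m + a + 3) - 4 * m * (m + 1)
        - 2 * b * (b + 1) - 2 * (b - e) * (b - e + 1) := by
  subst hde ha hb
  rcases he with rfl | rfl
  · constructor
    · ring
    · have h3 : 5 * m - 3 * c ≥ 1 := by linarith
      have h4 : m ≥ 5 * (5 * m - 3 * c) := by linarith
      nlinarith [mul_le_mul_of_nonneg_left h4 (by linarith : (0:ℤ) ≤ 5 * m - 3 * c),
        sq_nonneg (5 * m - 3 * c)]
  · constructor
    · ring
    · have h3 : 5 * m - 3 * c ≥ 2 := by omega
      have h4 : 2 * m ≥ 10 * (5 * m - 3 * c) - 15 := by omega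
      nlinarith [mul_le_mul_of_nonneg_left h4 (by linarith : (0:ℤ) ≤ 5 * m - 3 * c),
        sq_nonneg (5 * m - 3 * c), mul_pos (by linarith : (0:ℤ) < 5*m-3*c-1) (by linarith : (0:ℤ) < 5*m-3*c)]
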